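/- arXiv:2209.04707 — 3 statements merged into one kernel-verified Lean document; each statement's English description precedes it below -/
import Mathlib

section
/- Let 0 < q < 1, let m be a nonnegative integer and let 0 ≤ α < 1. Let f = h + conj(g) with h(z) = z − Σ_{u=2}^∞ |a_u| z^u and g(z) = Σ_{u=1}^∞ |b_u| z^u, and suppose Σ_{u=2}^∞ [u]_q^m (|a_u| + |b_u|) ≤ 1 − α − |b_1| (i.e., f ∈ \bar{S}_H^q(m, α, u)). Then for every z with |z| = r < 1, |f(z)| ≤ (1 + |b_1|) r + (1/[2]_q^m)(1 − α − |b_1|) r². -/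
open Metric Complex

/-- The `q`-integer `[u]_q = (1 - q^u)/(1 - q) = 1 + q + ⋯ + q^(u-1)`. -/
noncomputable def qInt (q : ℝ) (u : ℕ) : ℝ := (1 - q ^ u) / (1 - q)

/-- Growth (upper bound): if `f = h + conj g` has negative coefficients and
`Σ_{u≥2} [u]_q^m (|a_u| + |b_u|) ≤ 1 - α - |b_1|`, then for `|z| = r < 1`,
`|f(z)| ≤ (1 + |b_1|) r + (1/[2]_q^m)(1 - α - |b_1|) r²`. -/
theorem growth_upper_bound
    (q α : ℝ) (hq0 : 0 < q) (hq1 : q < 1) (m : ℕ)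
    (hα0 : 0 ≤ α) (hα1 : α < 1)
    (a b : ℕ → ℂ)
    (h g f : ℂ → ℂ)
    (hh : ∀ z ∈ ball (0 : ℂ) 1,
      h z = z - ∑' u : ℕ, ((‖a (u + 2)‖ : ℝ) : ℂ) * z ^ (u + 2))
    (hg : ∀ z ∈ ball (0 : ℂ) 1,
      g z = ∑' u : ℕ, ((‖b (u + 1)‖ : ℝ) : ℂ) * z ^ (u + 1))
    (hf : ∀ z ∈ ball (0 : ℂ) 1, f z = h z + (starRingEnd ℂ) (g z))
    (hs : Summable fun u : ℕ =>
      qInt q (u + 2) ^ m * (‖a (u + 2)‖ + ‖b (u + 2)‖))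
    (hcoef : (∑' u : ℕ,
        qInt q (u + 2) ^ m * (‖a (u + 2)‖ + ‖b (u + 2)‖)) ≤
      1 - α - ‖b 1‖) :
    ∀ z : ℂ, ‖z‖ < 1 →
      ‖f z‖ ≤ (1 + ‖b 1‖) * ‖z‖ +
        1 / qInt q 2 ^ m * (1 - α - ‖b 1‖) * ‖z‖ ^ 2 := by
  intro z hz
  have hzball : z ∈ ball (0 : ℂ) 1 := by simpa [mem_ball, dist_eq] using hz
  set r := ‖z‖ with hrdef
  have hr0 : 0 ≤ r := norm_nonneg z
  have hr1 : r < 1 := hz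
  have h1q : 0 < 1 - q := by linarith
  -- basic facts about qInt
  have hqInt_ge_one : ∀ u : ℕ, 1 ≤ qInt q (u + 2) := by
    intro u
    rw [qInt, le_div_iff₀ h1q]
    have hq' : q ^ (u + 2) ≤ q ^ 1 :=
      pow_le_pow_of_le_one hq0.le hq1.le (by omega)
    simp only [pow_one] at hq'
    linarith
  have hq2_one : (1 : ℝ) ≤ qInt q 2 := hqInt_ge_one 0
  have hc_one : (1 : ℝ) ≤ qInt q 2 ^ m := one_le_pow₀ hq2_one
  have hc_pos : (0 : ℝ) < qInt q 2 ^ m := lt_of_lt_of_le one_pos hc_one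
  have hq2_le : ∀ u : ℕ, qInt q 2 ≤ qInt q (u + 2) := by
    intro u
    rw [qInt, qInt, div_le_div_iff_of_pos_right h1q]
    have hq' : q ^ (u + 2) ≤ q ^ 2 :=
      pow_le_pow_of_le_one hq0.le hq1.le (by omega)
    linarith
  have hcu : ∀ u : ℕ, qInt q 2 ^ m ≤ qInt q (u + 2) ^ m := fun u =>
    pow_le_pow_left₀ (by linarith) (hq2_le u) m
  -- abbreviations
  set A : ℕ → ℝ := fun u => ‖a (u + 2)‖ with hA
  set B : ℕ → ℝ := fun u => ‖b (u + 2)‖ with hB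
  set T : ℕ → ℝ := fun u => A u + B u with hT
  have hT0 : ∀ u, 0 ≤ T u := fun u =>
    add_nonneg (norm_nonneg _) (norm_nonneg _)
  have hcuT : ∀ u, 0 ≤ qInt q (u + 2) ^ m * T u := fun u =>
    mul_nonneg (le_trans (by linarith [hcu u]) (le_refl _)) (hT0 u)
  have hsumT : Summable T := by
    apply Summable.of_nonneg_of_le hT0 _ hs
    intro u
    have h1 : 1 ≤ qInt q (u + 2) ^ m := le_trans hc_one (hcu u)
    show T u ≤ qInt q (u + 2) ^ m * T u
    nlinarith [hT0 u]
  have hsumA : Summable A :=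
    Summable.of_nonneg_of_le (fun u => norm_nonneg _)
      (fun u => by simp [hT]; positivity) hsumT
  have hsumB : Summable B :=
    Summable.of_nonneg_of_le (fun u => norm_nonneg _)
      (fun u => by simp [hT]; positivity) hsumT
  -- bound on sum T
  have hS : qInt q 2 ^ m * (∑' u, T u) ≤ 1 - α - ‖b 1‖ := by
    have : qInt q 2 ^ m * (∑' u, T u) = ∑' u, qInt q 2 ^ m * T u :=
      (tsum_mul_left).symm
    rw [this]
    refine le_trans (Summable.tsum_le_tsum (fun u => ?_) (hsumT.mul_left _) hs) hcoef
    exact mul_le_mul_of_nonneg_right (hcu u) (hT0 u)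
  -- powers of r
  have hrpow : ∀ n : ℕ, r ^ n ≤ 1 := fun n => pow_le_one₀ hr0 hr1.le
  have hrpow2 : ∀ u : ℕ, r ^ (u + 2) ≤ r ^ 2 := by
    intro u
    calc r ^ (u + 2) = r ^ u * r ^ 2 := by ring
    _ ≤ 1 * r ^ 2 := by
        apply mul_le_mul_of_nonneg_right (hrpow u) (by positivity)
    _ = r ^ 2 := one_mul _
  -- summability of the weighted series
  have hsumAr : Summable (fun u => A u * r ^ (u + 2)) := by
    apply Summable.of_nonneg_of_le (fun u => by positivity) _ hsumA
    intro u
    calc A u * r ^ (u + 2) ≤ A u * 1 :=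
          mul_le_mul_of_nonneg_left (hrpow _) (norm_nonneg _)
    _ = A u := mul_one _
  have hsumBr : Summable (fun u => B u * r ^ (u + 2)) := by
    apply Summable.of_nonneg_of_le (fun u => by positivity) _ hsumB
    intro u
    calc B u * r ^ (u + 2) ≤ B u * 1 :=
          mul_le_mul_of_nonneg_left (hrpow _) (norm_nonneg _)
    _ = B u := mul_one _
  -- bound |h z|
  have hhb : ‖h z‖ ≤ r + ∑' u, A u * r ^ (u + 2) := by
    rw [hh z hzball]
    have hnorm : ∀ u : ℕ,
        ‖((A u : ℝ) : ℂ) * z ^ (u + 2)‖ = A u * r ^ (u + 2) := by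
      intro u
      simp [norm_mul, norm_pow,
        _root_.abs_of_nonneg (norm_nonneg (a (u + 2))), hA, hrdef]
    have hsumnorm : Summable fun u : ℕ => ‖((A u : ℝ) : ℂ) * z ^ (u + 2)‖ := by
      simpa only [hnorm] using hsumAr
    calc ‖z - ∑' u : ℕ, ((A u : ℝ) : ℂ) * z ^ (u + 2)‖
        ≤ ‖z‖ + ‖∑' u : ℕ, ((A u : ℝ) : ℂ) * z ^ (u + 2)‖ := by
          simpa [sub_eq_add_neg] using
            norm_add_le z (-(∑' u : ℕ, ((A u : ℝ) : ℂ) * z ^ (u + 2)))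
    _ ≤ r + ∑' u, A u * r ^ (u + 2) := by
        refine add_le_add (le_refl r) ?_
        calc ‖∑' u : ℕ, ((A u : ℝ) : ℂ) * z ^ (u + 2)‖
            ≤ ∑' u : ℕ, ‖((A u : ℝ) : ℂ) * z ^ (u + 2)‖ :=
              norm_tsum_le_tsum_norm hsumnorm
        _ = ∑' u, A u * r ^ (u + 2) := by
              exact tsum_congr hnorm
  -- bound |g z|
  have hsumBr1 : Summable (fun u : ℕ => ‖b (u + 1)‖ * r ^ (u + 1)) := by
    rw [← summable_nat_add_iff 1]
    simpa using hsumBr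
  have hgb : ‖g z‖ ≤
      ‖b 1‖ * r + ∑' u, B u * r ^ (u + 2) := by
    rw [hg z hzball]
    have hnorm : ∀ u : ℕ,
        ‖((‖b (u + 1)‖ : ℝ) : ℂ) * z ^ (u + 1)‖
          = ‖b (u + 1)‖ * r ^ (u + 1) := by
      intro u
      simp [norm_mul, norm_pow,
        _root_.abs_of_nonneg (norm_nonneg (b (u + 1))), hrdef]
    have hsumnorm : Summable fun u : ℕ =>
        ‖((‖b (u + 1)‖ : ℝ) : ℂ) * z ^ (u + 1)‖ := by
      simpa [hnorm] using hsumBr1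
    calc ‖∑' u : ℕ, ((‖b (u + 1)‖ : ℝ) : ℂ) * z ^ (u + 1)‖
        ≤ ∑' u : ℕ, ‖((‖b (u + 1)‖ : ℝ) : ℂ) * z ^ (u + 1)‖ :=
          norm_tsum_le_tsum_norm hsumnorm
    _ = ∑' u : ℕ, ‖b (u + 1)‖ * r ^ (u + 1) := tsum_congr hnorm
    _ = ‖b 1‖ * r + ∑' u, B u * r ^ (u + 2) := by
        rw [Summable.tsum_eq_zero_add hsumBr1]
        simp [hB]
  -- bound the tail sum
  have htail : (∑' u, A u * r ^ (u + 2)) + (∑' u, B u * r ^ (u + 2))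
      ≤ 1 / qInt q 2 ^ m * (1 - α - ‖b 1‖) * r ^ 2 := by
    have h1 : (∑' u, A u * r ^ (u + 2)) + (∑' u, B u * r ^ (u + 2))
        = ∑' u, T u * r ^ (u + 2) := by
      rw [← Summable.tsum_add hsumAr hsumBr]
      exact tsum_congr fun u => by simp [hT]; ring
    rw [h1]
    have h2 : ∑' u, T u * r ^ (u + 2) ≤ (∑' u, T u) * r ^ 2 := by
      rw [← tsum_mul_right]
      refine Summable.tsum_le_tsum (fun u => ?_) ?_ (hsumT.mul_right _)
      · exact mul_le_mul_of_nonneg_left (hrpow2 u) (hT0 u)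
      · apply Summable.of_nonneg_of_le (fun u => by positivity)
          (fun u => mul_le_mul_of_nonneg_left (hrpow2 u) (hT0 u)) (hsumT.mul_right _)
    refine le_trans h2 ?_
    have h3 : (∑' u, T u) ≤ 1 / qInt q 2 ^ m * (1 - α - ‖b 1‖) := by
      rw [one_div, inv_mul_eq_div, le_div_iff₀ hc_pos]
      linarith [hS]
    have : (∑' u, T u) * r ^ 2 ≤
        (1 / qInt q 2 ^ m * (1 - α - ‖b 1‖)) * r ^ 2 :=
      mul_le_mul_of_nonneg_right h3 (by positivity)
    linarith
  -- combine
  rw [hf z hzball]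
  calc ‖h z + (starRingEnd ℂ) (g z)‖
      ≤ ‖h z‖ + ‖(starRingEnd ℂ) (g z)‖ :=
        norm_add_le _ _
  _ = ‖h z‖ + ‖g z‖ := by rw [Complex.norm_conj]
  _ ≤ (r + ∑' u, A u * r ^ (u + 2)) +
        (‖b 1‖ * r + ∑' u, B u * r ^ (u + 2)) := add_le_add hhb hgb
  _ ≤ (1 + ‖b 1‖) * r +
        1 / qInt q 2 ^ m * (1 - α - ‖b 1‖) * r ^ 2 := by
      have := htail
      linarith
end

section
/- Let 0 < q < 1, let m be a nonnegative integer and let 0 ≤ α < 1. Let f = h + conj(g) with h(z) = z − Σ_{u=2}^∞ |a_u| z^u and g(z) = Σ_{u=1}^∞ |b_u| z^u, and suppose Σ_{u=2}^∞ [u]_q^m (|a_u| + |b_u|) ≤ 1 − α − |b_1| (i.e., f ∈ \bar{S}_H^q(m, α, u)). Then for every z with |z| = r < 1, |f(z)| ≥ (1 − |b_1|) r − (1/[2]_q^m)(1 − α − |b_1|) r². -/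
open Metric Complex

/-- Growth (lower bound): if `f = h + conj g` has negative coefficients and
`Σ_{u≥2} [u]_q^m (|a_u| + |b_u|) ≤ 1 - α - |b_1|`, then for `|z| = r < 1`,
`|f(z)| ≥ (1 - |b_1|) r - (1/[2]_q^m)(1 - α - |b_1|) r²`. -/
theorem growth_lower_bound
    (q α : ℝ) (hq0 : 0 < q) (hq1 : q < 1) (m : ℕ)
    (hα0 : 0 ≤ α) (hα1 : α < 1)
    (a b : ℕ → ℂ)
    (h g f : ℂ → ℂ)
    (hh : ∀ z ∈ ball (0 : ℂ) 1,
      h z = z - ∑' u : ℕ, ((‖a (u + 2)‖ : ℝ) : ℂ) * z ^ (u + 2))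
    (hg : ∀ z ∈ ball (0 : ℂ) 1,
      g z = ∑' u : ℕ, ((‖b (u + 1)‖ : ℝ) : ℂ) * z ^ (u + 1))
    (hf : ∀ z ∈ ball (0 : ℂ) 1, f z = h z + (starRingEnd ℂ) (g z))
    (hs : Summable fun u : ℕ =>
      qInt q (u + 2) ^ m * (‖a (u + 2)‖ + ‖b (u + 2)‖))
    (hcoef : (∑' u : ℕ,
        qInt q (u + 2) ^ m * (‖a (u + 2)‖ + ‖b (u + 2)‖)) ≤
      1 - α - ‖b 1‖) :
    ∀ z : ℂ, ‖z‖ < 1 →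
      (1 - ‖b 1‖) * ‖z‖ -
        1 / qInt q 2 ^ m * (1 - α - ‖b 1‖) * ‖z‖ ^ 2 ≤
      ‖f z‖ := by
  intro z hz
  set r := ‖z‖ with hrdef
  have hr0 : 0 ≤ r := norm_nonneg z
  have hr1 : r < 1 := hz
  have hzb : z ∈ ball (0 : ℂ) 1 := by simpa [mem_ball, Complex.dist_eq] using hz
  have hq1' : 0 < 1 - q := by linarith
  -- q-integer facts
  have hqint_ge1 : ∀ u : ℕ, 1 ≤ u → 1 ≤ qInt q u := by
    intro u hu
    rw [qInt, le_div_iff₀ hq1']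
    have h1 := pow_le_pow_of_le_one hq0.le hq1.le hu
    rw [pow_one] at h1
    linarith
  have hqint_mono : ∀ u : ℕ, qInt q 2 ≤ qInt q (u + 2) := by
    intro u
    rw [qInt, qInt, div_le_div_iff₀ hq1' hq1']
    have h1 := pow_le_pow_of_le_one hq0.le hq1.le (show 2 ≤ u + 2 by omega)
    have h2 : 0 < q ^ (u + 2) := pow_pos hq0 _
    nlinarith
  have hP1 : 1 ≤ qInt q 2 ^ m := by simpa using pow_le_pow_left₀ (by norm_num : (0:ℝ) ≤ 1) (hqint_ge1 2 (by norm_num)) m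
  have hP0 : (0 : ℝ) < qInt q 2 ^ m := by linarith
  have hPmono : ∀ u : ℕ, qInt q 2 ^ m ≤ qInt q (u + 2) ^ m := fun u =>
    pow_le_pow_left₀ (by linarith [hqint_ge1 2 (by norm_num : (1:ℕ) ≤ 2)]) (hqint_mono u) m
  -- abbreviations
  set β1 : ℝ := ‖b 1‖ with hβ1
  have hβ1nn : 0 ≤ β1 := norm_nonneg _
  have habnn : ∀ u : ℕ, 0 ≤ ‖a (u + 2)‖ + ‖b (u + 2)‖ := fun u =>
    add_nonneg (norm_nonneg _) (norm_nonneg _)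
  -- summability of the plain coefficient series
  have hsab : Summable (fun u : ℕ => ‖a (u + 2)‖ + ‖b (u + 2)‖) := by
    apply Summable.of_nonneg_of_le habnn _ hs
    intro u
    have := hPmono u
    exact le_mul_of_one_le_left (habnn u) (le_trans hP1 this)
  have hsA : Summable (fun u : ℕ => ‖a (u + 2)‖) := by
    apply Summable.of_nonneg_of_le (fun u => norm_nonneg _) _ hsab
    intro u; linarith [norm_nonneg (b (u + 2))]
  have hsB : Summable (fun u : ℕ => ‖b (u + 2)‖) := by
    apply Summable.of_nonneg_of_le (fun u => norm_nonneg _) _ hsab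
    intro u; linarith [norm_nonneg (a (u + 2))]
  set S : ℝ := ∑' u : ℕ, (‖a (u + 2)‖ + ‖b (u + 2)‖) with hS
  have hSnn : 0 ≤ S := tsum_nonneg habnn
  -- key coefficient estimate: S ≤ (1 - α - β1)/[2]^m
  have hSle : S ≤ 1 / qInt q 2 ^ m * (1 - α - β1) := by
    have h1 : qInt q 2 ^ m * S ≤
        ∑' u : ℕ, qInt q (u + 2) ^ m * (‖a (u + 2)‖ + ‖b (u + 2)‖) := by
      rw [hS, ← tsum_mul_left]
      exact Summable.tsum_le_tsum (fun u => mul_le_mul_of_nonneg_right (hPmono u) (habnn u))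
        (hsab.mul_left _) hs
    rw [one_div_mul_eq_div, le_div_iff₀ hP0, mul_comm]
    exact le_trans h1 hcoef
  -- the analytic bounds
  set A : ℂ := ∑' u : ℕ, ((‖a (u + 2)‖ : ℝ) : ℂ) * z ^ (u + 2) with hA
  set B : ℂ := ∑' u : ℕ, ((‖b (u + 1)‖ : ℝ) : ℂ) * z ^ (u + 1) with hB
  have hpow_le : ∀ u : ℕ, r ^ (u + 2) ≤ r ^ 2 := fun u =>
    pow_le_pow_of_le_one hr0 hr1.le (by omega)
  -- bound on A
  have hsAr : Summable (fun u : ℕ => ‖a (u + 2)‖ * r ^ (u + 2)) := by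
    apply Summable.of_nonneg_of_le (fun u => by positivity) _ hsA
    intro u
    exact mul_le_of_le_one_right (norm_nonneg _) (pow_le_one₀ hr0 hr1.le)
  have hAbound : ‖A‖ ≤ r ^ 2 * (∑' u : ℕ, ‖a (u + 2)‖) := by
    have h1 : ‖A‖ ≤ ∑' u : ℕ, ‖a (u + 2)‖ * r ^ (u + 2) := by
      rw [hA]
      have := norm_tsum_le_tsum_norm (f := fun u : ℕ =>
        ((‖a (u + 2)‖ : ℝ) : ℂ) * z ^ (u + 2)) ?_
      · simpa [norm_mul, Complex.norm_real,
          _root_.abs_of_nonneg (norm_nonneg _), norm_pow] using this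
      · simpa [norm_mul, Complex.norm_real,
          _root_.abs_of_nonneg (norm_nonneg _), norm_pow] using hsAr
    have h2 : (∑' u : ℕ, ‖a (u + 2)‖ * r ^ (u + 2)) ≤
        ∑' u : ℕ, ‖a (u + 2)‖ * r ^ 2 := by
      apply Summable.tsum_le_tsum _ hsAr (hsA.mul_right _)
      intro u
      exact mul_le_mul_of_nonneg_left (hpow_le u) (norm_nonneg _)
    rw [tsum_mul_right] at h2
    calc ‖A‖ ≤ _ := h1
      _ ≤ _ := h2
      _ = r ^ 2 * (∑' u : ℕ, ‖a (u + 2)‖) := mul_comm _ _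
  -- bound on B
  have hsB1 : Summable (fun u : ℕ => ‖b (u + 1)‖) :=
    (summable_nat_add_iff 1).mp (by simpa using hsB)
  have hsBr : Summable (fun u : ℕ => ‖b (u + 1)‖ * r ^ (u + 1)) := by
    apply Summable.of_nonneg_of_le (fun u => by positivity) _ hsB1
    intro u
    exact mul_le_of_le_one_right (norm_nonneg _) (pow_le_one₀ hr0 hr1.le)
  have hBbound : ‖B‖ ≤ β1 * r + r ^ 2 * (∑' u : ℕ, ‖b (u + 2)‖) := by
    have h1 : ‖B‖ ≤ ∑' u : ℕ, ‖b (u + 1)‖ * r ^ (u + 1) := by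
      rw [hB]
      have := norm_tsum_le_tsum_norm (f := fun u : ℕ =>
        ((‖b (u + 1)‖ : ℝ) : ℂ) * z ^ (u + 1)) ?_
      · simpa [norm_mul, Complex.norm_real,
          _root_.abs_of_nonneg (norm_nonneg _), norm_pow] using this
      · simpa [norm_mul, Complex.norm_real,
          _root_.abs_of_nonneg (norm_nonneg _), norm_pow] using hsBr
    have hsplit : (∑' u : ℕ, ‖b (u + 1)‖ * r ^ (u + 1)) =
        β1 * r + ∑' u : ℕ, ‖b (u + 2)‖ * r ^ (u + 2) := by
      have := Summable.tsum_eq_zero_add (f := fun u : ℕ => ‖b (u + 1)‖ * r ^ (u + 1)) hsBr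
      simpa [pow_one] using this
    have hsBr2 : Summable (fun u : ℕ => ‖b (u + 2)‖ * r ^ (u + 2)) := by
      apply Summable.of_nonneg_of_le (fun u => by positivity) _ hsB
      intro u
      exact mul_le_of_le_one_right (norm_nonneg _) (pow_le_one₀ hr0 hr1.le)
    have h2 : (∑' u : ℕ, ‖b (u + 2)‖ * r ^ (u + 2)) ≤
        ∑' u : ℕ, ‖b (u + 2)‖ * r ^ 2 := by
      apply Summable.tsum_le_tsum _ hsBr2 (hsB.mul_right _)
      intro u
      exact mul_le_mul_of_nonneg_left (hpow_le u) (norm_nonneg _)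
    rw [tsum_mul_right] at h2
    calc ‖B‖ ≤ _ := h1
      _ = β1 * r + ∑' u : ℕ, ‖b (u + 2)‖ * r ^ (u + 2) := hsplit
      _ ≤ β1 * r + (∑' u : ℕ, ‖b (u + 2)‖) * r ^ 2 := by linarith
      _ = β1 * r + r ^ 2 * (∑' u : ℕ, ‖b (u + 2)‖) := by ring
  -- lower bound on |f z|
  have hfz : f z = z - (A - (starRingEnd ℂ) B) := by
    rw [hf z hzb, hh z hzb, hg z hzb, ← hA, ← hB]; ring
  have hflow : r - ‖A‖ - ‖B‖ ≤ ‖f z‖ := by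
    have h1 : ‖z‖ - ‖A - (starRingEnd ℂ) B‖ ≤ ‖z - (A - (starRingEnd ℂ) B)‖ :=
      norm_sub_norm_le z (A - (starRingEnd ℂ) B)
    have h2 : ‖A - (starRingEnd ℂ) B‖ ≤ ‖A‖ + ‖(starRingEnd ℂ) B‖ := norm_sub_le _ _
    have h3 : ‖(starRingEnd ℂ) B‖ = ‖B‖ := by
      simp [Complex.norm_conj]
    rw [hfz]
    linarith
  -- combine
  have hsum : (∑' u : ℕ, ‖a (u + 2)‖) + (∑' u : ℕ, ‖b (u + 2)‖) = S := by
    rw [hS, Summable.tsum_add hsA hsB]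
  have hr2S : r ^ 2 * S ≤ r ^ 2 * (1 / qInt q 2 ^ m * (1 - α - β1)) :=
    mul_le_mul_of_nonneg_left hSle (by positivity)
  nlinarith [hAbound, hBbound, hflow, hsum, hr2S]
end

section
/- Let 0 < q < 1, let m be a nonnegative integer and let 0 ≤ α < 1. If x_u ≥ 0 (u ≥ 2) and y_u ≥ 0 (u ≥ 1) satisfy x_1 ≥ 0 and Σ_{u=1}^∞ (x_u + y_u) = 1, and f(z) = Σ_{u=1}^∞ (x_u h_u(z) + y_u g_u(z)) where h_1(z) = z, h_u(z) = z − ((1 − α)/[u]_q^m) z^u for u ≥ 2 and g_u(z) = z − ((1 − α)/[u]_q^m) conj(z)^u for u ≥ 1, then the coefficients of f, namely a_u = ((1 − α)/[u]_q^m) x_u (u ≥ 2) and b_u = ((1 − α)/[u]_q^m) y_u (u ≥ 1), satisfy Σ_{u=2}^∞ [u]_q^m a_u + Σ_{u=1}^∞ [u]_q^m b_u = (1 − α)(1 − x_1) ≤ 1 − α, so f belongs to the class \bar{S}_H^q(m, α, u). -/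
open Metric Complex

/-- If `x_u, y_u ≥ 0` with `Σ_{u≥1} (x_u + y_u) = 1` and
`f(z) = Σ_{u≥1} (x_u h_u(z) + y_u g_u(z))` where `h_1(z) = z`,
`h_u(z) = z - ((1-α)/[u]_q^m) z^u` for `u ≥ 2` and
`g_u(z) = z - ((1-α)/[u]_q^m) conj(z)^u` for `u ≥ 1`, then the coefficients
`a_u = ((1-α)/[u]_q^m) x_u` (`u ≥ 2`) and `b_u = ((1-α)/[u]_q^m) y_u` (`u ≥ 1`)
satisfy `Σ_{u≥2} [u]_q^m a_u + Σ_{u≥1} [u]_q^m b_u = (1-α)(1-x_1) ≤ 1 - α`,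
so `f` belongs to `S̄_H^q(m, α, u)`. -/
theorem convex_combination_mem_class
    (q α : ℝ) (hq0 : 0 < q) (hq1 : q < 1) (m : ℕ)
    (hα0 : 0 ≤ α) (hα1 : α < 1)
    (x y : ℕ → ℝ) (hx : ∀ u, 0 ≤ x u) (hy : ∀ u, 0 ≤ y u)
    (hxy : (∑' u : ℕ, (x (u + 1) + y (u + 1))) = 1)
    (f : ℂ → ℂ)
    (hf : ∀ z ∈ ball (0 : ℂ) 1,
      f z = ∑' u : ℕ,
        ((x (u + 1) : ℂ) *
          (if u = 0 then z
            else z - (((1 - α) / qInt q (u + 1) ^ m : ℝ) : ℂ) * z ^ (u + 1)) +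
        (y (u + 1) : ℂ) *
          (z - (((1 - α) / qInt q (u + 1) ^ m : ℝ) : ℂ) *
            ((starRingEnd ℂ) z) ^ (u + 1))))
    (a b : ℕ → ℝ)
    (ha : ∀ u : ℕ, 2 ≤ u → a u = (1 - α) / qInt q u ^ m * x u)
    (hb : ∀ u : ℕ, 1 ≤ u → b u = (1 - α) / qInt q u ^ m * y u) :
    (∑' u : ℕ, qInt q (u + 2) ^ m * a (u + 2)) +
      (∑' u : ℕ, qInt q (u + 1) ^ m * b (u + 1)) = (1 - α) * (1 - x 1) ∧
    (1 - α) * (1 - x 1) ≤ 1 - α := by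
  have hqpos : ∀ u : ℕ, 1 ≤ u → 0 < qInt q u := by
    intro u hu
    have h1 : q ^ u < 1 := pow_lt_one₀ hq0.le hq1 (by omega)
    exact div_pos (by linarith) (by linarith)
  have hne : ∀ u : ℕ, 1 ≤ u → qInt q u ^ m ≠ 0 := fun u hu =>
    (pow_pos (hqpos u hu) m).ne'
  have hS : Summable (fun u : ℕ => x (u + 1) + y (u + 1)) := by
    by_contra h
    rw [tsum_eq_zero_of_not_summable h] at hxy
    norm_num at hxy
  have hSx : Summable (fun u : ℕ => x (u + 1)) :=
    hS.of_nonneg_of_le (fun u => hx _) (fun u => le_add_of_nonneg_right (hy _))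
  have hSy : Summable (fun u : ℕ => y (u + 1)) :=
    hS.of_nonneg_of_le (fun u => hy _) (fun u => le_add_of_nonneg_left (hx _))
  have hSx2 : Summable (fun u : ℕ => x (u + 2)) := by
    have := hSx.comp_injective (add_left_injective 1)
    simpa [Function.comp_def, add_assoc] using this
  have hshift : (∑' u : ℕ, x (u + 1)) = x 1 + ∑' u : ℕ, x (u + 2) := by
    simpa using Summable.tsum_eq_zero_add hSx
  have hsum : (∑' u : ℕ, x (u + 1)) + (∑' u : ℕ, y (u + 1)) = 1 := by
    rw [← Summable.tsum_add hSx hSy]; exact hxy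
  have ea : (∑' u : ℕ, qInt q (u + 2) ^ m * a (u + 2))
      = (1 - α) * ∑' u : ℕ, x (u + 2) := by
    rw [← tsum_mul_left]
    refine tsum_congr fun u => ?_
    rw [ha (u + 2) (by omega)]
    field_simp [hne (u + 2) (by omega)]
  have eb : (∑' u : ℕ, qInt q (u + 1) ^ m * b (u + 1))
      = (1 - α) * ∑' u : ℕ, y (u + 1) := by
    rw [← tsum_mul_left]
    refine tsum_congr fun u => ?_
    rw [hb (u + 1) (by omega)]
    field_simp [hne (u + 1) (by omega)]
  constructor
  · rw [ea, eb, ← mul_add]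
    have : (∑' u : ℕ, x (u + 2)) + (∑' u : ℕ, y (u + 1)) = 1 - x 1 := by
      rw [hshift] at hsum; linarith
    rw [this]
  · nlinarith [hx 1]
end
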